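/- In ℝ³, the function ρ₂(x,t) = (4π)^{-3/2}(1+νt)^{-1/2} (e^{-(|x|+ct)²/(4(1+νt))} - e^{-(|x|-ct)²/(4(1+νt))})/(c|x|) satisfies ρ₂(·,t) = -(w(t) * K_ν(t) * φ₀)(·) for t > 0; equivalently, ρ₂ solves the system ∂_t ρ = νΔρ - a, ∂_t a = -c²Δρ + νΔa (in the ρ component), being the wave evolution with zero initial position and initial velocity -φ₀ composed with the heat semigroup: u(x,t) = -∫₀ᵗ [(|x|-cs)u₀(||x|-cs|) + (|x|+cs)u₀(|x|+cs)]/(2|x|) ds with u₀ = K_ν(t)*φ₀. -/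

import Mathlib

open MeasureTheory Real intervalIntegral

noncomputable section

/-- The radial Gaussian `u₀(r) = (4πλ)^{-3/2} e^{-r²/(4λ)}` (the heat evolution of `φ₀`). -/
def gaussRad (lam r : ℝ) : ℝ :=
  (4 * π * lam) ^ (-(3 : ℝ) / 2) * exp (-r ^ 2 / (4 * lam))

/-- Explicit evaluation of `ρ₂(·,t) = -(w(t) * K_ν(t) * φ₀)`: for radius `r > 0`,
`(4π)^{-3/2}(1+νt)^{-1/2}(e^{-(r+ct)²/(4(1+νt))} - e^{-(r-ct)²/(4(1+νt))})/(cr)`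
equals `-∫₀ᵗ [(r-cs)u₀(|r-cs|) + (r+cs)u₀(r+cs)]/(2r) ds` with `u₀ = gaussRad (1+νt)`. -/
theorem rho2_explicit (ν c t : ℝ) (hν : 0 < ν) (hc : 0 < c) (ht : 0 < t)
    (r : ℝ) (hr : 0 < r) :
    (4 * π) ^ (-(3 : ℝ) / 2) * (1 + ν * t) ^ (-(1 : ℝ) / 2) *
        (exp (-(r + c * t) ^ 2 / (4 * (1 + ν * t))) -
          exp (-(r - c * t) ^ 2 / (4 * (1 + ν * t)))) / (c * r) =
      -∫ s in (0 : ℝ)..t,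
        ((r - c * s) * gaussRad (1 + ν * t) |r - c * s| +
          (r + c * s) * gaussRad (1 + ν * t) (r + c * s)) / (2 * r) := by
  set lam : ℝ := 1 + ν * t with hlam_def
  have hlam : 0 < lam := by positivity
  set A : ℝ := (4 * π * lam) ^ (-(3 : ℝ) / 2) with hA_def
  have hApos : 0 < A := by
    have : 0 < 4 * π * lam := by positivity
    positivity
  set F : ℝ → ℝ := fun s =>
    A * lam / (c * r) * (exp (-(r - c * s) ^ 2 / (4 * lam)) - exp (-(r + c * s) ^ 2 / (4 * lam)))
    with hF_def
  have hF : ∀ s : ℝ, HasDerivAt F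
      (((r - c * s) * (A * exp (-(r - c * s) ^ 2 / (4 * lam))) +
        (r + c * s) * (A * exp (-(r + c * s) ^ 2 / (4 * lam)))) / (2 * r)) s := by
    intro s
    have h1 : HasDerivAt (fun s : ℝ => r - c * s) (0 - c * 1) s :=
      (hasDerivAt_const s r).sub ((hasDerivAt_id s).const_mul c)
    have h2 : HasDerivAt (fun s : ℝ => r + c * s) (0 + c * 1) s :=
      (hasDerivAt_const s r).add ((hasDerivAt_id s).const_mul c)
    have e1 := (((h1.fun_pow 2).fun_neg.div_const (4 * lam)).exp)
    have e2 := (((h2.fun_pow 2).fun_neg.div_const (4 * lam)).exp)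
    have hd := (e1.fun_sub e2).const_mul (A * lam / (c * r))
    refine hd.congr_deriv ?_
    field_simp
    ring
  have hcont : Continuous fun s : ℝ =>
      (((r - c * s) * (A * exp (-(r - c * s) ^ 2 / (4 * lam))) +
        (r + c * s) * (A * exp (-(r + c * s) ^ 2 / (4 * lam)))) / (2 * r)) := by
    fun_prop
  have hint : (∫ s in (0 : ℝ)..t,
      ((r - c * s) * gaussRad lam |r - c * s| +
        (r + c * s) * gaussRad lam (r + c * s)) / (2 * r)) = F t - F 0 := by
    have := intervalIntegral.integral_eq_sub_of_hasDerivAt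
      (f := F) (fun s _ => hF s) (hcont.intervalIntegrable 0 t)
    rw [← this]
    congr 1
    funext s
    simp [gaussRad, sq_abs, hA_def]
  rw [hint]
  have hAl : A * lam = (4 * π) ^ (-(3 : ℝ) / 2) * lam ^ (-(1 : ℝ) / 2) := by
    have h4π : (0 : ℝ) ≤ 4 * π := by positivity
    rw [hA_def, Real.mul_rpow h4π hlam.le, mul_assoc]
    congr 1
    rw [← Real.rpow_add_one hlam.ne' (-(3 : ℝ) / 2)]
    norm_num
  simp only [hF_def]
  rw [← hAl]
  have hcr : c * r ≠ 0 := by positivity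
  field_simp
  ring
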